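/- Let M ⊂ ℝ^k be a manifold of class C^r with r ≥ 2 around a point x ∈ M. Then there exists δ > 0 such that for every y in the open ball B(x, δ) there is a unique nearest point P(y) of M to y, and the nearest-point projection map P : B(x, δ) → M is of class C^{r−1}. -/

import Mathlib

open Set Metric
open scoped RealInnerProductSpace

noncomputable section

/-- `M ⊆ ℝ^k` is a `C^r` manifold (of some codimension `c`) around the point `x ∈ M`:
there are an open set `V ∋ x` and a `C^r` map `F : V → ℝ^c` whose derivative is
surjective (full rank) on `M ∩ V`, such that `M ∩ V = {y ∈ V | F y = 0}`. -/
def IsCrManifoldAt (k r : ℕ) (M : Set (EuclideanSpace ℝ (Fin k)))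
    (x : EuclideanSpace ℝ (Fin k)) : Prop :=
  ∃ (c : ℕ) (V : Set (EuclideanSpace ℝ (Fin k)))
    (F : EuclideanSpace ℝ (Fin k) → EuclideanSpace ℝ (Fin c)),
      IsOpen V ∧ x ∈ V ∧ ContDiffOn ℝ r F V ∧
      (∀ y ∈ M ∩ V, Function.Surjective (fderiv ℝ F y)) ∧
      M ∩ V = {y ∈ V | F y = 0}

/-- The adjoint as a continuous linear map on operator spaces (real case). -/
noncomputable def adjL {E F : Type*} [NormedAddCommGroup E] [InnerProductSpace ℝ E]
    [NormedAddCommGroup F] [InnerProductSpace ℝ F] [CompleteSpace E] [CompleteSpace F] :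
    (E →L[ℝ] F) →L[ℝ] (F →L[ℝ] E) :=
  LinearMap.mkContinuous
    { toFun := fun B => ContinuousLinearMap.adjoint B
      map_add' := fun B C => by simp [map_add]
      map_smul' := fun r B => by simp }
    1 (fun B => by simpa using (ContinuousLinearMap.adjoint.norm_map B).le)

@[simp] lemma adjL_apply {E F : Type*} [NormedAddCommGroup E] [InnerProductSpace ℝ E]
    [NormedAddCommGroup F] [InnerProductSpace ℝ F] [CompleteSpace E] [CompleteSpace F]
    (B : E →L[ℝ] F) : adjL B = ContinuousLinearMap.adjoint B := rfl

set_option maxHeartbeats 2000000 in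
/-- **Local regularity of the nearest-point projection.**
If `M ⊆ ℝ^k` is a `C^r` manifold (`r ≥ 2`) around a point `x ∈ M`, then there is `δ > 0`
and a map `P` on `B(x, δ)` such that for every `y ∈ B(x, δ)`, `P y` is the unique nearest
point of `M` to `y`, and `P` is of class `C^{r-1}` on `B(x, δ)`. -/
theorem projection_regularity (k r : ℕ) (hr : 2 ≤ r)
    (M : Set (EuclideanSpace ℝ (Fin k))) (x : EuclideanSpace ℝ (Fin k)) (hx : x ∈ M)
    (hM : IsCrManifoldAt k r M x) :
    ∃ δ > (0 : ℝ), ∃ P : EuclideanSpace ℝ (Fin k) → EuclideanSpace ℝ (Fin k),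
      (∀ y ∈ ball x δ,
        P y ∈ M ∧ (∀ z ∈ M, dist y (P y) ≤ dist y z) ∧
        (∀ z ∈ M, dist y z = dist y (P y) → z = P y)) ∧
      ContDiffOn ℝ (r - 1) P (ball x δ) := by
  classical
  obtain ⟨c, V, F, hVopen, hxV, hFsm, hsurj, hMV⟩ := hM
  have hxMV : x ∈ M ∩ V := ⟨hx, hxV⟩
  have hFx0 : F x = 0 := by
    have := hMV ▸ hxMV; exact this.2
  set m : ℕ := r - 1 with hmdef
  have hm1 : (1 : WithTop ℕ∞) ≤ (m : ℕ) := by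
    exact_mod_cast (by omega : 1 ≤ m)
  have hmr : ((m : ℕ) : WithTop ℕ∞) + 1 = (r : ℕ) := by
    exact_mod_cast (by omega : m + 1 = r)
  have hmler : ((m : ℕ) : WithTop ℕ∞) ≤ (r : ℕ) := by rw [← hmr]; exact le_self_add
  have hr1 : (1 : WithTop ℕ∞) ≤ (r : ℕ) := le_trans hm1 hmler
  -- differentiability facts
  have hFat : ∀ p ∈ V, ContDiffAt ℝ r F p := fun p hp => hFsm.contDiffAt (hVopen.mem_nhds hp)
  set D : (EuclideanSpace ℝ (Fin k)) → ((EuclideanSpace ℝ (Fin k)) →L[ℝ] (EuclideanSpace ℝ (Fin c))) := fun p => fderiv ℝ F p with hDdef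
  set A : (EuclideanSpace ℝ (Fin k)) → ((EuclideanSpace ℝ (Fin c)) →L[ℝ] (EuclideanSpace ℝ (Fin k))) := fun p => adjL (D p) with hAdef
  have hDat : ContDiffAt ℝ m D x := (hFat x hxV).fderiv_right (le_of_eq hmr)
  have hAat : ContDiffAt ℝ m A x := by
    rw [hAdef]
    exact (ContinuousLinearMap.contDiff adjL).contDiffAt.comp x hDat
  set T : (EuclideanSpace ℝ (Fin k)) →L[ℝ] (EuclideanSpace ℝ (Fin c)) := D x with hTdef
  have hTsurj : Function.Surjective T := hsurj x hxMV
  -- adjoint facts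
  have hadj_inner : ∀ (p : (EuclideanSpace ℝ (Fin k))) (μ : (EuclideanSpace ℝ (Fin c))) (v : (EuclideanSpace ℝ (Fin k))), ⟪A p μ, v⟫ = ⟪μ, D p v⟫ := by
    intro p μ v
    simp only [hAdef, adjL_apply]
    exact ContinuousLinearMap.adjoint_inner_left (D p) v μ
  -- the map Θ
  set Θ : (EuclideanSpace ℝ (Fin k)) × (EuclideanSpace ℝ (Fin c)) → (EuclideanSpace ℝ (Fin k)) × (EuclideanSpace ℝ (Fin c)) := fun q => (q.1 + A q.1 q.2, F q.1) with hΘdef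
  have hΘsm : ContDiffAt ℝ m Θ (x, 0) := by
    apply ContDiffAt.prodMk
    · exact contDiffAt_fst.add ((hAat.comp (x, 0) contDiffAt_fst).clm_apply contDiffAt_snd)
    · exact ((hFat x hxV).of_le hmler).comp (x, 0) contDiffAt_fst
  -- derivative of Θ at (x, 0)
  set L : ((EuclideanSpace ℝ (Fin k)) × (EuclideanSpace ℝ (Fin c))) →L[ℝ] ((EuclideanSpace ℝ (Fin k)) × (EuclideanSpace ℝ (Fin c))) :=
    ((ContinuousLinearMap.fst ℝ (EuclideanSpace ℝ (Fin k)) (EuclideanSpace ℝ (Fin c))) + (A x).comp (ContinuousLinearMap.snd ℝ (EuclideanSpace ℝ (Fin k)) (EuclideanSpace ℝ (Fin c)))).prod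
      (T.comp (ContinuousLinearMap.fst ℝ (EuclideanSpace ℝ (Fin k)) (EuclideanSpace ℝ (Fin c)))) with hLdef
  have hΘL : HasFDerivAt Θ L (x, 0) := by
    have hA' : HasFDerivAt A (fderiv ℝ A x) x := (hAat.differentiableAt (lt_of_lt_of_le zero_lt_one hm1).ne').hasFDerivAt
    have h0 := hA'.comp ((x, 0) : (EuclideanSpace ℝ (Fin k)) × (EuclideanSpace ℝ (Fin c))) (hasFDerivAt_fst (𝕜 := ℝ) (p := ((x : (EuclideanSpace ℝ (Fin k))), (0 : (EuclideanSpace ℝ (Fin c))))))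
    have h1 := h0.clm_apply
      (hasFDerivAt_snd (𝕜 := ℝ) (p := ((x : (EuclideanSpace ℝ (Fin k))), (0 : (EuclideanSpace ℝ (Fin c))))))
    have h1' : HasFDerivAt (fun q : (EuclideanSpace ℝ (Fin k)) × (EuclideanSpace ℝ (Fin c)) => A q.1 q.2)
        ((A x).comp (ContinuousLinearMap.snd ℝ (EuclideanSpace ℝ (Fin k)) (EuclideanSpace ℝ (Fin c)))) (x, 0) := by
      simpa using h1
    have h2 : HasFDerivAt (fun q : (EuclideanSpace ℝ (Fin k)) × (EuclideanSpace ℝ (Fin c)) => F q.1)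
        (T.comp (ContinuousLinearMap.fst ℝ (EuclideanSpace ℝ (Fin k)) (EuclideanSpace ℝ (Fin c)))) (x, 0) := by
      exact (((hFat x hxV).differentiableAt (lt_of_lt_of_le zero_lt_one hr1).ne').hasFDerivAt).comp (x, 0)
        (hasFDerivAt_fst (p := ((x : (EuclideanSpace ℝ (Fin k))), (0 : (EuclideanSpace ℝ (Fin c))))))
    exact ((hasFDerivAt_fst (p := ((x : (EuclideanSpace ℝ (Fin k))), (0 : (EuclideanSpace ℝ (Fin c)))))).add h1').prodMk h2
  -- L is bijective
  have hL0 : ∀ q : (EuclideanSpace ℝ (Fin k)) × (EuclideanSpace ℝ (Fin c)), L q = 0 → q = 0 := by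
    rintro ⟨p, μ⟩ h0
    have h1 : p + A x μ = 0 ∧ T p = 0 := by
      simpa [hLdef, Prod.ext_iff] using h0
    have hAxμ : A x μ = -p := eq_neg_of_add_eq_zero_right h1.1
    have hAxμ0 : A x μ = 0 := by
      have hin : ⟪A x μ, A x μ⟫ = 0 := by
        rw [hadj_inner x μ (A x μ), hAxμ, map_neg, h1.2, neg_zero, inner_zero_right]
      exact inner_self_eq_zero.mp hin
    have hp0 : p = 0 := by rw [hAxμ] at hAxμ0; simpa using hAxμ0
    have hμ0 : μ = 0 := by
      have : ∀ u : (EuclideanSpace ℝ (Fin c)), ⟪μ, u⟫ = 0 := by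
        intro u
        obtain ⟨v, hv⟩ := hTsurj u
        rw [← hv, ← hadj_inner x μ v, hAxμ0, inner_zero_left]
      exact inner_self_eq_zero.mp (this μ)
    simp [hp0, hμ0, Prod.ext_iff]
  have hLinj : Function.Injective L := by
    intro a b hab
    have := hL0 (a - b) (by rw [map_sub, hab, sub_self])
    rwa [sub_eq_zero] at this
  have hLsurj : Function.Surjective L := by
    exact (LinearMap.injective_iff_surjective (f := (L : ((EuclideanSpace ℝ (Fin k)) × (EuclideanSpace ℝ (Fin c))) →ₗ[ℝ] ((EuclideanSpace ℝ (Fin k)) × (EuclideanSpace ℝ (Fin c)))))).mp hLinj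
  set eL : ((EuclideanSpace ℝ (Fin k)) × (EuclideanSpace ℝ (Fin c))) ≃L[ℝ] ((EuclideanSpace ℝ (Fin k)) × (EuclideanSpace ℝ (Fin c))) :=
    (LinearEquiv.ofBijective (L : ((EuclideanSpace ℝ (Fin k)) × (EuclideanSpace ℝ (Fin c))) →ₗ[ℝ] ((EuclideanSpace ℝ (Fin k)) × (EuclideanSpace ℝ (Fin c)))) ⟨hLinj, hLsurj⟩).toContinuousLinearEquiv
    with heLdef
  have heL : (eL : ((EuclideanSpace ℝ (Fin k)) × (EuclideanSpace ℝ (Fin c))) →L[ℝ] ((EuclideanSpace ℝ (Fin k)) × (EuclideanSpace ℝ (Fin c)))) = L := by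
    apply ContinuousLinearMap.ext; intro q; rfl
  have hΘe : HasFDerivAt Θ (eL : ((EuclideanSpace ℝ (Fin k)) × (EuclideanSpace ℝ (Fin c))) →L[ℝ] ((EuclideanSpace ℝ (Fin k)) × (EuclideanSpace ℝ (Fin c)))) (x, 0) := by rw [heL]; exact hΘL
  have hΘstrict : HasStrictFDerivAt Θ (eL : ((EuclideanSpace ℝ (Fin k)) × (EuclideanSpace ℝ (Fin c))) →L[ℝ] ((EuclideanSpace ℝ (Fin k)) × (EuclideanSpace ℝ (Fin c)))) (x, 0) :=
    hΘsm.hasStrictFDerivAt' hΘe (lt_of_lt_of_le zero_lt_one hm1).ne'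
  set PH := hΘstrict.toOpenPartialHomeomorph Θ with hPHdef
  have hPHcoe : ⇑PH = Θ := rfl
  have hxPH : ((x, 0) : (EuclideanSpace ℝ (Fin k)) × (EuclideanSpace ℝ (Fin c))) ∈ PH.source := hΘstrict.mem_toOpenPartialHomeomorph_source
  have hΘx0 : Θ ((x, 0) : (EuclideanSpace ℝ (Fin k)) × (EuclideanSpace ℝ (Fin c))) = (x, 0) := by
    simp [hΘdef, hFx0]
  have hx0tgt : ((x, 0) : (EuclideanSpace ℝ (Fin k)) × (EuclideanSpace ℝ (Fin c))) ∈ PH.target := by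
    have := PH.map_source hxPH; rwa [hPHcoe, hΘx0] at this
  set g : (EuclideanSpace ℝ (Fin k)) × (EuclideanSpace ℝ (Fin c)) → (EuclideanSpace ℝ (Fin k)) × (EuclideanSpace ℝ (Fin c)) := ⇑PH.symm with hgdef
  have hgx : g (x, 0) = (x, 0) := by
    have := PH.left_inv hxPH
    rw [hPHcoe, hΘx0] at this
    exact this
  have hgsm : ContDiffAt ℝ m g (x, 0) := by
    have h1 : PH.symm (x, 0) = (x, 0) := hgx
    apply PH.contDiffAt_symm hx0tgt
    · rw [h1]; exact hΘe
    · rw [h1]; exact hΘsm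
  -- an open set U ∋ (x,0), inside the target, where g is C^m
  obtain ⟨U₀, hU₀nhds, hgU₀⟩ : ∃ u ∈ nhds ((x, 0) : (EuclideanSpace ℝ (Fin k)) × (EuclideanSpace ℝ (Fin c))), ContDiffOn ℝ m g u := by
    apply hgsm.contDiffOn le_rfl
    intro h; exfalso; exact (by simp : ((m : ℕ) : WithTop ℕ∞) ≠ (⊤ : ℕ∞)) h
  obtain ⟨U, hUsub, hUopen, hxU⟩ :=
    _root_.mem_nhds_iff.mp (Filter.inter_mem hU₀nhds (PH.open_target.mem_nhds hx0tgt))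
  have hgU : ContDiffOn ℝ m g U := hgU₀.mono (fun q hq => (hUsub hq).1)
  have hUtgt : U ⊆ PH.target := fun q hq => (hUsub hq).2
  -- the candidate projection
  set h : (EuclideanSpace ℝ (Fin k)) → (EuclideanSpace ℝ (Fin k)) := fun y => (g (y, 0)).1 with hhdef
  set W := {y : (EuclideanSpace ℝ (Fin k)) | ((y, (0 : (EuclideanSpace ℝ (Fin c)))) : (EuclideanSpace ℝ (Fin k)) × (EuclideanSpace ℝ (Fin c))) ∈ U} with hWdef
  have hWopen : IsOpen W := hUopen.preimage (continuous_id.prodMk continuous_const)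
  have hxW : x ∈ W := hxU
  have hgWsm : ContDiffOn ℝ m (fun y : (EuclideanSpace ℝ (Fin k)) => g (y, 0)) W :=
    hgU.comp ((contDiff_id.prodMk contDiff_const).contDiffOn) (fun y hy => hy)
  have hhsm : ContDiffOn ℝ m h W := (contDiff_fst.comp_contDiffOn hgWsm)
  have hhx : h x = x := by simp [hhdef, hgx]
  have hhcont : ContinuousOn h W := hhsm.continuousOn
  -- antilipschitz constant for A x
  have hAxinj : Function.Injective (A x) := by
    intro a b hab
    have h0 : A x (a - b) = 0 := by rw [map_sub, hab, sub_self]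
    have : ∀ u : (EuclideanSpace ℝ (Fin c)), ⟪a - b, u⟫ = 0 := by
      intro u
      obtain ⟨v, hv⟩ := hTsurj u
      rw [← hv, ← hadj_inner x (a - b) v, h0, inner_zero_left]
    have := inner_self_eq_zero.mp (this (a - b))
    rwa [sub_eq_zero] at this
  obtain ⟨K, hKpos, hKanti⟩ :=
    LinearMap.exists_antilipschitzWith ((A x) : (EuclideanSpace ℝ (Fin c)) →ₗ[ℝ] (EuclideanSpace ℝ (Fin k)))
      (LinearMap.ker_eq_bot.mpr hAxinj)
  have hK0 : (0 : ℝ) < K := hKpos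
  have hKanti' : ∀ μ : (EuclideanSpace ℝ (Fin c)), ‖μ‖ ≤ K * ‖A x μ‖ := by
    intro μ
    have := hKanti.le_mul_dist μ 0
    simpa [dist_eq_norm] using this
  -- a closed ball inside V where A is close to A x
  have h2K : (0 : ℝ) < (2 * K)⁻¹ := by positivity
  have hAcont : ContinuousAt A x := hAat.continuousAt
  have hev : {p : (EuclideanSpace ℝ (Fin k)) | p ∈ V ∧ dist (A p) (A x) < (2 * K)⁻¹} ∈ nhds x :=
    Filter.inter_mem (hVopen.mem_nhds hxV) (hAcont (ball_mem_nhds _ h2K))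
  obtain ⟨ε₀, hε₀pos, hε₀ball⟩ := Metric.mem_nhds_iff.mp hev
  set ε₁ := ε₀ / 2 with hε₁def
  have hε₁pos : 0 < ε₁ := by positivity
  have hε₁V : closedBall x ε₁ ⊆ V := by
    intro p hp
    exact (hε₀ball (lt_of_le_of_lt (mem_closedBall.mp hp) (by linarith))).1
  have hε₁A : ∀ p ∈ closedBall x ε₁, ‖A p - A x‖ ≤ (2 * K)⁻¹ := by
    intro p hp
    have := (hε₀ball (lt_of_le_of_lt (mem_closedBall.mp hp) (by linarith))).2
    rw [dist_eq_norm] at this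
    exact this.le
  have hA2 : ∀ p ∈ closedBall x ε₁, ∀ μ : (EuclideanSpace ℝ (Fin c)), ‖μ‖ ≤ 2 * K * ‖A p μ‖ := by
    intro p hp μ
    have h1 : ‖μ‖ ≤ K * ‖A x μ‖ := hKanti' μ
    have h2 : ‖A x μ‖ ≤ ‖A p μ‖ + ‖(A x - A p) μ‖ := by
      have he : A x μ = A p μ + (A x - A p) μ := by simp
      rw [he]; exact norm_add_le _ _
    have h3 : ‖(A x - A p) μ‖ ≤ (2 * K)⁻¹ * ‖μ‖ := by
      calc ‖(A x - A p) μ‖ ≤ ‖A x - A p‖ * ‖μ‖ := (A x - A p).le_opNorm μ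
        _ ≤ (2 * K)⁻¹ * ‖μ‖ := by
            apply mul_le_mul_of_nonneg_right _ (norm_nonneg μ)
            rw [norm_sub_rev]; exact hε₁A p hp
    have hKK : (K : ℝ) * (2 * K)⁻¹ = 2⁻¹ := by have hK := hK0.ne'; push_cast; field_simp
    have h4 : ‖μ‖ ≤ K * ‖A p μ‖ + 2⁻¹ * ‖μ‖ := by
      calc ‖μ‖ ≤ K * ‖A x μ‖ := h1
        _ ≤ K * (‖A p μ‖ + (2 * K)⁻¹ * ‖μ‖) := by
            apply mul_le_mul_of_nonneg_left _ hK0.le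
            exact le_trans h2 (by linarith)
        _ = K * ‖A p μ‖ + 2⁻¹ * ‖μ‖ := by
            have hKK' : (K : ℝ) * ((2 * K)⁻¹ * ‖μ‖) = 2⁻¹ * ‖μ‖ := by
              rw [← mul_assoc, hKK]
            rw [mul_add, hKK']
    linarith
  -- a ball inside the source
  obtain ⟨η, hηpos, hηsub⟩ :=
    Metric.mem_nhds_iff.mp (PH.open_source.mem_nhds hxPH)
  -- the open set where both h lands in V and the defining data is available
  set O := W ∩ h ⁻¹' V with hOdef
  have hOopen : IsOpen O := hhcont.isOpen_inter_preimage hWopen hVopen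
  have hxO : x ∈ O := ⟨hxW, by simp only [mem_preimage, hhx]; exact hxV⟩
  obtain ⟨ε₂, hε₂pos, hε₂sub⟩ := Metric.mem_nhds_iff.mp (hOopen.mem_nhds hxO)
  -- choose δ
  set δ := min (min (ε₂ / 2) (ε₁ / 5)) (η / (3 + 2 * K)) with hδdef
  have hδpos : 0 < δ := by
    have h1 : (0:ℝ) < ε₂ / 2 := by positivity
    have h2 : (0:ℝ) < ε₁ / 5 := by positivity
    have h3 : (0:ℝ) < η / (3 + 2 * K) := by positivity
    exact lt_min (lt_min h1 h2) h3
  have hδε₂ : δ ≤ ε₂ / 2 :=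
    le_trans (min_le_left (min (ε₂ / 2) (ε₁ / 5)) (η / (3 + 2 * K)))
      (min_le_left (ε₂ / 2) (ε₁ / 5))
  have hδε₁ : 5 * δ ≤ ε₁ := by
    have h0 : δ ≤ ε₁ / 5 :=
      le_trans (min_le_left (min (ε₂ / 2) (ε₁ / 5)) (η / (3 + 2 * K)))
        (min_le_right (ε₂ / 2) (ε₁ / 5))
    linarith
  have hδη : δ * (3 + 2 * K) ≤ η := by
    have h1 : δ ≤ η / (3 + 2 * K) := min_le_right (min (ε₂ / 2) (ε₁ / 5)) (η / (3 + 2 * K))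
    have h2 : (0 : ℝ) < 3 + 2 * K := by positivity
    calc δ * (3 + 2 * K) ≤ (η / (3 + 2 * K)) * (3 + 2 * K) :=
          mul_le_mul_of_nonneg_right h1 h2.le
      _ = η := by field_simp
  have hδη3 : 3 * δ < η := by nlinarith
  have hδη2K : 2 * K * δ < η := by nlinarith
  refine ⟨δ, hδpos, h, fun y hy => ?_, ?_⟩
  swap
  · -- smoothness
    apply hhsm.mono
    intro y hy
    have : y ∈ O := hε₂sub (mem_ball.mpr (lt_of_lt_of_le (mem_ball.mp hy) (by linarith)))
    exact this.1
  have hdyx : dist y x < δ := mem_ball.mp hy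
  have hyO : y ∈ O := hε₂sub (mem_ball.mpr (by linarith))
  have hyU : ((y, (0 : (EuclideanSpace ℝ (Fin c)))) : (EuclideanSpace ℝ (Fin k)) × (EuclideanSpace ℝ (Fin c))) ∈ U := hyO.1
  have hytgt : ((y, (0 : (EuclideanSpace ℝ (Fin c)))) : (EuclideanSpace ℝ (Fin k)) × (EuclideanSpace ℝ (Fin c))) ∈ PH.target := hUtgt hyU
  set p₀ := h y with hp₀def
  have hgsrc : g (y, 0) ∈ PH.source := PH.map_target hytgt
  have hΘg : Θ (g (y, 0)) = (y, 0) := by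
    have := PH.right_inv hytgt; rwa [hPHcoe] at this
  have hp₀V : p₀ ∈ V := hyO.2
  have hFp₀ : F p₀ = 0 := by
    have := congrArg Prod.snd hΘg
    simpa [hΘdef, hp₀def, hhdef] using this
  have hp₀M : p₀ ∈ M := by
    have : p₀ ∈ M ∩ V := by rw [hMV]; exact ⟨hp₀V, hFp₀⟩
    exact this.1
  -- the key uniqueness claim
  have key : ∀ z ∈ M, (∀ w ∈ M, dist y z ≤ dist y w) → z = p₀ := by
    intro z hzM hzmin
    have hdyz : dist y z < δ := lt_of_le_of_lt (hzmin x hx) hdyx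
    have hdzx : dist z x < 2 * δ := by
      calc dist z x ≤ dist z y + dist y x := dist_triangle z y x
        _ = dist y z + dist y x := by rw [dist_comm z y]
        _ < δ + δ := by linarith
        _ = 2 * δ := by ring
    have hzball : z ∈ closedBall x ε₁ := by
      apply mem_closedBall.mpr; linarith
    have hzV : z ∈ V := hε₁V hzball
    have hzMV : z ∈ M ∩ V := ⟨hzM, hzV⟩
    have hFz0 : F z = 0 := by
      have := hMV ▸ hzMV; exact this.2
    -- z is a local min of the squared distance on the level set of F
    have hextr : IsLocalExtrOn (fun w : (EuclideanSpace ℝ (Fin k)) => ⟪w - y, w - y⟫) {w | F w = F z} z := by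
      refine Or.inl ?_
      have hev1 : ∀ᶠ w in nhdsWithin z {w | F w = F z}, w ∈ V :=
        eventually_nhdsWithin_of_eventually_nhds (hVopen.eventually_mem hzV)
      have hev2 : ∀ᶠ w in nhdsWithin z {w | F w = F z}, w ∈ {w | F w = F z} :=
        eventually_mem_nhdsWithin
      filter_upwards [hev1, hev2] with w hwV hwF
      have hwM : w ∈ M := by
        have hFw : F w = 0 := by rw [hwF, hFz0]
        have : w ∈ M ∩ V := by rw [hMV]; exact ⟨hwV, hFw⟩
        exact this.1
      have hle : dist y z ≤ dist y w := hzmin w hwM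
      have h1 : ‖z - y‖ = dist y z := by rw [dist_eq_norm, norm_sub_rev]
      have h2 : ‖w - y‖ = dist y w := by rw [dist_eq_norm, norm_sub_rev]
      rw [real_inner_self_eq_norm_sq, real_inner_self_eq_norm_sq, h1, h2]
      exact pow_le_pow_left₀ dist_nonneg hle 2
    have hFstrict : HasStrictFDerivAt F (D z) z := (hFat z hzV).hasStrictFDerivAt (lt_of_lt_of_le zero_lt_one hr1).ne'
    have hsub : HasStrictFDerivAt (fun w : (EuclideanSpace ℝ (Fin k)) => w - y) (ContinuousLinearMap.id ℝ (EuclideanSpace ℝ (Fin k))) z :=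
      (hasStrictFDerivAt_id z).sub_const y
    have hφstrict : HasStrictFDerivAt (fun w : (EuclideanSpace ℝ (Fin k)) => ⟪w - y, w - y⟫)
        ((fderivInnerCLM ℝ (z - y, z - y)).comp
          ((ContinuousLinearMap.id ℝ (EuclideanSpace ℝ (Fin k))).prod (ContinuousLinearMap.id ℝ (EuclideanSpace ℝ (Fin k))))) z :=
      hsub.inner ℝ hsub
    obtain ⟨Λ, Λ₀, hΛne, hΛ⟩ := hextr.exists_linear_map_of_hasStrictFDerivAt hFstrict hφstrict
    have hΛ₀ne : Λ₀ ≠ 0 := by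
      intro h0
      apply hΛne
      subst h0
      have hΛ0 : Λ = 0 := by
        apply LinearMap.ext
        intro u
        obtain ⟨v, hv⟩ := hsurj z hzMV u
        have := hΛ v
        rw [zero_smul, add_zero] at this
        rw [← hv]
        simpa [hDdef] using this
      simp [hΛ0, Prod.ext_iff]
    set w := (InnerProductSpace.toDual ℝ (EuclideanSpace ℝ (Fin c))).symm (LinearMap.toContinuousLinearMap Λ) with hwdef
    have hwip : ∀ u : (EuclideanSpace ℝ (Fin c)), ⟪w, u⟫ = Λ u := by
      intro u
      rw [hwdef, InnerProductSpace.toDual_symm_apply]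
      rfl
    have hkey : ∀ v : (EuclideanSpace ℝ (Fin k)), ⟪A z w + (2 * Λ₀) • (z - y), v⟫ = 0 := by
      intro v
      have h1 := hΛ v
      have h2 : ((fderivInnerCLM ℝ ((z - y : (EuclideanSpace ℝ (Fin k))), (z - y : (EuclideanSpace ℝ (Fin k))))).comp
          ((ContinuousLinearMap.id ℝ (EuclideanSpace ℝ (Fin k))).prod (ContinuousLinearMap.id ℝ (EuclideanSpace ℝ (Fin k))))) v
          = 2 * ⟪z - y, v⟫ := by
        rw [ContinuousLinearMap.comp_apply]
        have hvv : (((ContinuousLinearMap.id ℝ (EuclideanSpace ℝ (Fin k))).prod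
            (ContinuousLinearMap.id ℝ (EuclideanSpace ℝ (Fin k)))) v) = (v, v) := rfl
        rw [hvv, fderivInnerCLM_apply]
        show ⟪z - y, v⟫ + ⟪v, z - y⟫ = 2 * ⟪z - y, v⟫
        rw [real_inner_comm v (z - y)]
        ring
      rw [h2] at h1
      rw [inner_add_left, real_inner_smul_left, hadj_inner z w v, hwip]
      rw [smul_eq_mul] at h1
      linarith
    have hvec : A z w + (2 * Λ₀) • (z - y) = 0 :=
      inner_self_eq_zero.mp (hkey _)
    set μ := (2 * Λ₀)⁻¹ • w with hμdef
    have h2Λ : (2 * Λ₀) ≠ 0 := mul_ne_zero two_ne_zero hΛ₀ne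
    have hAzμ : A z μ = y - z := by
      have hAzw : A z w = -((2 * Λ₀) • (z - y)) := eq_neg_of_add_eq_zero_left hvec
      rw [hμdef, map_smul, hAzw, smul_neg, smul_smul, inv_mul_cancel₀ h2Λ, one_smul, neg_sub]
    have hΘz : Θ (z, μ) = (y, 0) := by
      simp only [hΘdef, hAzμ, hFz0]
      rw [add_sub_cancel]
    have hμnorm : ‖μ‖ ≤ 2 * K * δ := by
      have h1 := hA2 z hzball μ
      rw [hAzμ] at h1
      have h2 : ‖y - z‖ = dist y z := by rw [dist_eq_norm]
      rw [h2] at h1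
      calc ‖μ‖ ≤ 2 * K * dist y z := h1
        _ ≤ 2 * K * δ := by
            apply mul_le_mul_of_nonneg_left hdyz.le (by positivity)
    have hzsrc : ((z, μ) : (EuclideanSpace ℝ (Fin k)) × (EuclideanSpace ℝ (Fin c))) ∈ PH.source := by
      apply hηsub
      rw [mem_ball, Prod.dist_eq]
      apply max_lt
      · calc dist z x < 2 * δ := hdzx
          _ < η := by linarith
      · rw [dist_zero_right]
        calc ‖μ‖ ≤ 2 * K * δ := hμnorm
          _ < η := hδη2K
    have heq := PH.injOn hzsrc hgsrc (by rw [hPHcoe, hΘz, hΘg])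
    have := congrArg Prod.fst heq
    simpa [hp₀def, hhdef] using this
  -- existence of a nearest point
  set Kc := M ∩ closedBall x ε₁ with hKcdef
  have hKceq : Kc = closedBall x ε₁ ∩ F ⁻¹' {0} := by
    ext w
    constructor
    · rintro ⟨hwM, hwb⟩
      have : w ∈ M ∩ V := ⟨hwM, hε₁V hwb⟩
      rw [hMV] at this
      exact ⟨hwb, by simpa using this.2⟩
    · rintro ⟨hwb, hwF⟩
      have : w ∈ M ∩ V := by
        rw [hMV]; exact ⟨hε₁V hwb, by simpa using hwF⟩
      exact ⟨this.1, hwb⟩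
  have hKccompact : IsCompact Kc := by
    rw [hKceq]
    apply (isCompact_closedBall x ε₁).of_isClosed_subset _ inter_subset_left
    exact ContinuousOn.preimage_isClosed_of_isClosed
      (hFsm.continuousOn.mono hε₁V) Metric.isClosed_closedBall isClosed_singleton
  have hKcne : Kc.Nonempty := ⟨x, hx, mem_closedBall_self hε₁pos.le⟩
  obtain ⟨q, hqKc, hqmin⟩ := hKccompact.exists_isMinOn hKcne
    ((continuous_const.dist continuous_id).continuousOn)
  have hqM : q ∈ M := hqKc.1
  have hqminM : ∀ z' ∈ M, dist y q ≤ dist y z' := by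
    intro z' hz'
    by_cases hz'b : z' ∈ closedBall x ε₁
    · exact hqmin ⟨hz', hz'b⟩
    · have h1 : dist y q ≤ dist y x := hqmin ⟨hx, mem_closedBall_self hε₁pos.le⟩
      have h2 : ε₁ < dist z' x := by
        by_contra hcon
        exact hz'b (mem_closedBall.mpr (not_lt.mp hcon))
      have h3 : dist z' x ≤ dist z' y + dist y x := dist_triangle z' y x
      have h4 : dist y z' = dist z' y := dist_comm y z'
      linarith
  have hqp₀ : q = p₀ := key q hqM hqminM
  refine ⟨hp₀M, ?_, ?_⟩
  · intro z hz
    rw [← hqp₀]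
    exact hqminM z hz
  · intro z hz hdz
    apply key z hz
    intro w hw
    rw [hdz, ← hqp₀]
    exact hqminM w hw

end
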